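/- The function λ(y) := (y - l(y)^2) / ((l(y) - 1)(y - l(y))), where l(y) = (y-1)/ln y, is strictly increasing on (1, ∞). -/

import Mathlib

open Real Set

-- basic positivity
lemma hA_pos {t : ℝ} (ht : 0 < t) : 0 < Real.exp t - 1 - t := by
  have h := Real.add_one_lt_exp ht.ne'
  linarith

lemma hA'_pos {t : ℝ} (ht : 0 < t) : 0 < Real.exp (-t) - 1 + t := by
  have h := Real.add_one_lt_exp (neg_ne_zero.mpr ht.ne')
  linarith

lemma hB_pos {t : ℝ} (ht : 0 < t) : 0 < t * Real.exp t - Real.exp t + 1 := by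
  have h : t * Real.exp t - Real.exp t + 1 = Real.exp t * (Real.exp (-t) - 1 + t) := by
    rw [Real.exp_neg]
    field_simp
    ring
  rw [h]
  exact mul_pos (Real.exp_pos t) (hA'_pos ht)

-- the tanh-type inequality
lemma g_ineq {s : ℝ} (hs : 0 < s) :
    3 * s < 2 * Real.sinh s + Real.sinh s / Real.cosh s := by
  set g : ℝ → ℝ := fun x => 2 * Real.sinh x + Real.sinh x / Real.cosh x - 3 * x with hg
  have hd : ∀ x : ℝ, HasDerivAt g
      (2 * Real.cosh x + (Real.cosh x * Real.cosh x - Real.sinh x * Real.sinh x) /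
        (Real.cosh x) ^ 2 - 3 * 1) x := by
    intro x
    exact (((Real.hasDerivAt_sinh x).const_mul 2).add
      ((Real.hasDerivAt_sinh x).div (Real.hasDerivAt_cosh x) (Real.cosh_pos x).ne')).sub
      ((hasDerivAt_id x).const_mul 3)
  have hmono : StrictMonoOn g (Set.Ici (0:ℝ)) := by
    apply strictMonoOn_of_deriv_pos (convex_Ici 0)
    · exact fun x _ => ((hd x).continuousAt).continuousWithinAt
    · intro x hx
      rw [interior_Ici] at hx
      rw [(hd x).deriv]
      have hc : 1 < Real.cosh x := (Real.one_lt_cosh).mpr (ne_of_gt hx)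
      have h1 : Real.cosh x * Real.cosh x - Real.sinh x * Real.sinh x = 1 := by
        have := Real.cosh_sq_sub_sinh_sq x
        nlinarith
      rw [h1]
      have hc0 : (0:ℝ) < Real.cosh x := Real.cosh_pos x
      have key : 2 * Real.cosh x + 1 / (Real.cosh x) ^ 2 - 3 * 1 =
          (Real.cosh x - 1) ^ 2 * (2 * Real.cosh x + 1) / (Real.cosh x) ^ 2 := by
        field_simp
        ring
      rw [key]
      exact div_pos (mul_pos (pow_pos (by linarith) 2) (by linarith)) (pow_pos hc0 2)
  have h0 : g 0 < g s := hmono (Set.self_mem_Ici) (Set.mem_Ici.mpr hs.le) hs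
  simp [hg, Real.sinh_zero] at h0
  linarith [h0]

lemma key_ineq {t : ℝ} (ht : 0 < t) :
    (t * Real.exp t - Real.exp t + 1) ^ 3 < Real.exp t * (Real.exp t - 1 - t) ^ 3 := by
  set s : ℝ := t / 3 with hsdef
  have hs : 0 < s := by positivity
  have h3 : 3 * s = t := by rw [hsdef]; ring
  set P : ℝ := Real.exp s with hP
  set Q : ℝ := Real.exp (-s) with hQ
  have hPQ : P * Q = 1 := by rw [hP, hQ, ← Real.exp_add]; simp
  have hPpos : 0 < P := Real.exp_pos s
  have hQpos : 0 < Q := Real.exp_pos (-s)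
  have hEt : Real.exp t = P ^ 3 := by
    rw [← h3, show (3:ℝ) * s = s + s + s by ring, Real.exp_add, Real.exp_add]; ring
  have hEnt : Real.exp (-t) = Q ^ 3 := by
    rw [← h3, show -((3:ℝ) * s) = -s + -s + -s by ring, Real.exp_add, Real.exp_add]; ring
  have hsinh : Real.sinh s = (P - Q) / 2 := Real.sinh_eq s
  have hcosh : Real.cosh s = (P + Q) / 2 := Real.cosh_eq s
  have hcoshpos : 0 < Real.cosh s := Real.cosh_pos s
  -- the product form
  have hprod : 2 * Real.cosh s * (2 * Real.sinh s + Real.sinh s / Real.cosh s - 3 * s) =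
      4 * Real.sinh s * Real.cosh s + 2 * Real.sinh s - 6 * s * Real.cosh s := by
    field_simp
    ring
  -- the identity
  have hid : Q * (Real.exp t - 1 - t) - P * (Real.exp (-t) - 1 + t) =
      2 * Real.cosh s * (2 * Real.sinh s + Real.sinh s / Real.cosh s - 3 * s) := by
    rw [hprod, hsinh, hcosh, hEt, hEnt, ← h3]
    linear_combination (P ^ 2 - Q ^ 2) * hPQ
  have hgpos : 0 < 2 * Real.sinh s + Real.sinh s / Real.cosh s - 3 * s := by
    have := g_ineq hs
    linarith
  have hid_pos : 0 < Q * (Real.exp t - 1 - t) - P * (Real.exp (-t) - 1 + t) := by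
    rw [hid]
    positivity
  set A : ℝ := Real.exp t - 1 - t with hA
  set A' : ℝ := Real.exp (-t) - 1 + t with hA'
  have hApos : 0 < A := hA_pos ht
  have hA'pos : 0 < A' := hA'_pos ht
  -- P^2 * A' < A
  have hlt : P ^ 2 * A' < A := by
    have h1 : P * (P * A') < P * (Q * A) := by
      apply mul_lt_mul_of_pos_left _ hPpos
      linarith
    calc P ^ 2 * A' = P * (P * A') := by ring
      _ < P * (Q * A) := h1
      _ = (P * Q) * A := by ring
      _ = A := by rw [hPQ]; ring
  have hcube : (P ^ 2 * A') ^ 3 < A ^ 3 :=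
    pow_lt_pow_left₀ hlt (by positivity) (by norm_num)
  have hBA : t * Real.exp t - Real.exp t + 1 = P ^ 3 * A' := by
    rw [← hEt, hA', Real.exp_neg]
    field_simp
    ring
  rw [hBA, hEt]
  calc (P ^ 3 * A') ^ 3 = P ^ 3 * ((P ^ 2 * A') ^ 3) := by ring
    _ < P ^ 3 * A ^ 3 := by
        apply mul_lt_mul_of_pos_left hcube (by positivity)

noncomputable def Faux (t : ℝ) : ℝ :=
  t / (Real.exp t - 1 - t) - (Real.exp t - 1) / (t * Real.exp t - Real.exp t + 1)

lemma Faux_hasDeriv {t : ℝ} (ht : 0 < t) :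
    HasDerivAt Faux
      ((1 * (Real.exp t - 1 - t) - t * (Real.exp t - 1)) / (Real.exp t - 1 - t) ^ 2 -
        (Real.exp t * (t * Real.exp t - Real.exp t + 1) -
          (Real.exp t - 1) * (1 * Real.exp t + t * Real.exp t - Real.exp t)) /
          (t * Real.exp t - Real.exp t + 1) ^ 2) t := by
  have hA := hA_pos ht
  have hB := hB_pos ht
  have h1 : HasDerivAt (fun t : ℝ => t / (Real.exp t - 1 - t))
      ((1 * (Real.exp t - 1 - t) - t * (Real.exp t - 1)) / (Real.exp t - 1 - t) ^ 2) t := by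
    exact (hasDerivAt_id t).div
      (((Real.hasDerivAt_exp t).sub_const 1).sub (hasDerivAt_id t)) hA.ne'
  have h2 : HasDerivAt (fun t : ℝ => (Real.exp t - 1) / (t * Real.exp t - Real.exp t + 1))
      ((Real.exp t * (t * Real.exp t - Real.exp t + 1) -
        (Real.exp t - 1) * (1 * Real.exp t + t * Real.exp t - Real.exp t)) /
        (t * Real.exp t - Real.exp t + 1) ^ 2) t := by
    exact ((Real.hasDerivAt_exp t).sub_const 1).div
      ((((hasDerivAt_id t).mul (Real.hasDerivAt_exp t)).sub (Real.hasDerivAt_exp t)).add_const 1)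
      hB.ne'
  exact h1.sub h2

lemma Faux_mono : StrictMonoOn Faux (Set.Ioi (0:ℝ)) := by
  apply strictMonoOn_of_deriv_pos (convex_Ioi 0)
  · intro x hx
    exact ((Faux_hasDeriv hx).continuousAt).continuousWithinAt
  · intro x hx
    rw [interior_Ioi] at hx
    rw [(Faux_hasDeriv hx).deriv]
    have hA := hA_pos hx
    have hB := hB_pos hx
    have hkey := key_ineq hx
    set A : ℝ := Real.exp x - 1 - x with hAdef
    set B : ℝ := x * Real.exp x - Real.exp x + 1 with hBdef
    have heq : (1 * A - x * (Real.exp x - 1)) / A ^ 2 -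
        (Real.exp x * B - (Real.exp x - 1) * (1 * Real.exp x + x * Real.exp x - Real.exp x)) / B ^ 2
        = (Real.exp x * A ^ 3 - B ^ 3) / (A ^ 2 * B ^ 2) := by
      have e1 : 1 * A - x * (Real.exp x - 1) = -B := by rw [hAdef, hBdef]; ring
      have e2 : Real.exp x * B - (Real.exp x - 1) * (1 * Real.exp x + x * Real.exp x - Real.exp x)
          = -(Real.exp x * A) := by rw [hAdef, hBdef]; ring
      rw [e1, e2]
      field_simp
      ring
    rw [heq]
    apply div_pos (by linarith) (by positivity)

noncomputable def l (y : ℝ) : ℝ := (y - 1) / Real.log y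

theorem stmt8 :
    StrictMonoOn (fun y => (y - (l y) ^ 2) / ((l y - 1) * (y - l y))) (Set.Ioi 1) := by
  have hpt : ∀ y ∈ Set.Ioi (1:ℝ),
      (y - (l y) ^ 2) / ((l y - 1) * (y - l y)) = Faux (Real.log y) := by
    intro y hy
    have hy1 : (1:ℝ) < y := hy
    have hy0 : (0:ℝ) < y := by linarith
    have ht : 0 < Real.log y := Real.log_pos hy1
    have hey : Real.exp (Real.log y) = y := Real.exp_log hy0
    have hA := hA_pos ht
    have hB := hB_pos ht
    rw [hey] at hA hB
    unfold Faux l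
    rw [hey]
    set t : ℝ := Real.log y
    have e1 : (y - 1) / t - 1 = (y - 1 - t) / t := by field_simp
    have e2 : y - (y - 1) / t = (t * y - y + 1) / t := by field_simp; ring
    have e3 : y - ((y - 1) / t) ^ 2 = (y * t ^ 2 - (y - 1) ^ 2) / t ^ 2 := by
      field_simp
    rw [e1, e2, e3]
    have hA' : y - 1 - t ≠ 0 := hA.ne'
    have hB' : t * y - y + 1 ≠ 0 := hB.ne'
    have hB'' : y * (t - 1) + 1 ≠ 0 := by intro h; apply hB'; linarith
    rw [div_mul_div_comm]
    field_simp
    ring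
  intro a ha b hb hab
  show (a - (l a) ^ 2) / ((l a - 1) * (a - l a)) < (b - (l b) ^ 2) / ((l b - 1) * (b - l b))
  rw [hpt a ha, hpt b hb]
  exact Faux_mono (Real.log_pos ha) (Real.log_pos hb)
    (Real.log_lt_log (by linarith [Set.mem_Ioi.mp ha]) hab)
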